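/- In a separable Hadamard space, the Fréchet mean (barycenter) map is 1-Lipschitz with respect to the 1-Wasserstein distance: d(b(P), b(Q)) ≤ W₁(P,Q) for any two probability measures P, Q with finite first moment. -/

import Mathlib

set_option linter.unusedSectionVars false
set_option linter.unusedVariables false
open MeasureTheory Set

class HadamardSpace (M : Type*) [MetricSpace M] : Prop where
  complete : CompleteSpace M
  npc : ∀ x y : M, ∃ m : M, ∀ z : M,
    dist z m ^ 2 ≤ dist z x ^ 2 / 2 + dist z y ^ 2 / 2 - dist x y ^ 2 / 4


/-- The 1-Wasserstein distance, as the infimum of ∫ d dπ over couplings π. -/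
noncomputable def W1 {M : Type*} [MetricSpace M] [MeasurableSpace M]
    (P Q : Measure M) : ℝ :=
  sInf { r : ℝ | ∃ π : Measure (M × M), IsProbabilityMeasure π ∧
    π.map Prod.fst = P ∧ π.map Prod.snd = Q ∧ r = ∫ p, dist p.1 p.2 ∂ π }

namespace BWLaux

variable {M : Type*} [MetricSpace M] [HadamardSpace M] [MeasurableSpace M] [BorelSpace M]

noncomputable def hmid (x y : M) : M := (HadamardSpace.npc x y).choose

lemma hmid_spec (x y z : M) :
    dist z (hmid x y) ^ 2 ≤ dist z x ^ 2 / 2 + dist z y ^ 2 / 2 - dist x y ^ 2 / 4 :=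
  (HadamardSpace.npc x y).choose_spec z

lemma le_of_sq_le_sq'' {a c : ℝ} (ha : 0 ≤ a) (hc : 0 ≤ c) (h : a ^ 2 ≤ c ^ 2) : a ≤ c := by
  nlinarith

lemma dist_hmid_left (x y : M) : dist x (hmid x y) ≤ dist x y / 2 := by
  have := hmid_spec x y x
  simp at this
  refine le_of_sq_le_sq'' dist_nonneg (by positivity) ?_
  rw [div_pow]
  nlinarith [this]

lemma dist_hmid_right (x y : M) : dist y (hmid x y) ≤ dist x y / 2 := by
  have := hmid_spec x y y
  simp [dist_comm y x] at this
  refine le_of_sq_le_sq'' dist_nonneg (by positivity) ?_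
  rw [div_pow]
  nlinarith [this]

lemma dist_hmid_left_eq (x y : M) : dist x (hmid x y) = dist x y / 2 := by
  refine le_antisymm (dist_hmid_left x y) ?_
  have h := dist_triangle x (hmid x y) y
  have h2 := dist_hmid_right x y
  rw [dist_comm (hmid x y) y] at h
  linarith

lemma integrable_sq_diff (a c : M) (R : Measure M)
    (hR : ∀ z : M, Integrable (fun y => dist z y) R) :
    Integrable (fun u => dist a u ^ 2 - dist c u ^ 2) R := by
  have hcont : Continuous (fun u => dist a u ^ 2 - dist c u ^ 2) := by fun_prop
  refine Integrable.mono' (((hR a).add (hR c)).const_mul (dist a c)) hcont.aestronglyMeasurable ?_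
  refine Filter.Eventually.of_forall (fun u => ?_)
  have h1 : |dist a u - dist c u| ≤ dist a c := abs_dist_sub_le a c u
  have h2 : ‖dist a u ^ 2 - dist c u ^ 2‖ = |dist a u - dist c u| * (dist a u + dist c u) := by
    rw [Real.norm_eq_abs]
    rw [sq_sub_sq, abs_mul, abs_of_nonneg (by positivity)]
    ring
  rw [h2]
  simp only [Pi.add_apply]
  calc |dist a u - dist c u| * (dist a u + dist c u)
      ≤ dist a c * (dist a u + dist c u) :=
        mul_le_mul_of_nonneg_right h1 (by positivity)
    _ = dist a c * ((fun y => dist a y) u + (fun y => dist c y) u) := by ring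

lemma integrable_dirac' (f : M → ℝ) (hf : Continuous f) (a : M) : Integrable f (Measure.dirac a) := by
  constructor
  · exact hf.aestronglyMeasurable
  · simp [HasFiniteIntegral, lintegral_dirac]

noncomputable def R2 (x y : M) (t : ℝ) : Measure M :=
  ENNReal.ofReal (1 - t) • Measure.dirac x + ENNReal.ofReal t • Measure.dirac y

lemma R2_prob (x y : M) {t : ℝ} (h0 : 0 ≤ t) (h1 : t ≤ 1) : IsProbabilityMeasure (R2 x y t) := by
  constructor
  simp only [R2, Measure.add_apply, Measure.smul_apply, measure_univ, smul_eq_mul, mul_one]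
  rw [← ENNReal.ofReal_add (by linarith) h0]
  norm_num

lemma R2_integrable (x y : M) (t : ℝ) (f : M → ℝ) (hf : Continuous f) :
    Integrable f (R2 x y t) := by
  refine Integrable.add_measure ?_ ?_ <;>
    exact (integrable_dirac' f hf _).smul_measure ENNReal.ofReal_ne_top

lemma R2_dist_integrable (x y : M) (t : ℝ) : ∀ z : M, Integrable (fun u => dist z u) (R2 x y t) :=
  fun z => R2_integrable x y t _ (continuous_const.dist continuous_id)

lemma R2_integral (x y : M) {t : ℝ} (h0 : 0 ≤ t) (h1 : t ≤ 1) (f : M → ℝ) (hf : Continuous f) :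
    ∫ u, f u ∂ (R2 x y t) = (1 - t) * f x + t * f y := by
  rw [R2, integral_add_measure ((integrable_dirac' f hf _).smul_measure ENNReal.ofReal_ne_top)
      ((integrable_dirac' f hf _).smul_measure ENNReal.ofReal_ne_top),
    integral_smul_measure, integral_smul_measure, integral_dirac, integral_dirac,
    ENNReal.toReal_ofReal (by linarith), ENNReal.toReal_ofReal h0]
  simp [smul_eq_mul]

section Bary

variable (b : Measure M → M)

noncomputable def midseq (b : Measure M → M) (R : Measure M) (w : M) : ℕ → M
  | 0 => w
  | (k+1) => hmid (b R) (midseq b R w k)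

variable
  (hb : ∀ (R : Measure M), IsProbabilityMeasure R →
      (∀ z : M, Integrable (fun y => dist z y) R) →
      ∀ x : M, (1 / 2 : ℝ) * ∫ y, (dist (b R) y ^ 2 - dist (b R) y ^ 2) ∂ R ≤
        (1 / 2 : ℝ) * ∫ y, (dist x y ^ 2 - dist (b R) y ^ 2) ∂ R)

include hb

lemma G_nonneg (R : Measure M) [IsProbabilityMeasure R]
    (hR : ∀ z : M, Integrable (fun y => dist z y) R) (x : M) :
    0 ≤ ∫ u, (dist x u ^ 2 - dist (b R) u ^ 2) ∂ R := by
  have h := hb R inferInstance hR x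
  simp only [sub_self, integral_zero, mul_zero] at h
  linarith

omit hb

lemma G_mid_step (R : Measure M) [IsProbabilityMeasure R]
    (hR : ∀ z : M, Integrable (fun y => dist z y) R) (x : M) :
    ∫ u, (dist (hmid (b R) x) u ^ 2 - dist (b R) u ^ 2) ∂ R ≤
      (1/2) * ∫ u, (dist x u ^ 2 - dist (b R) u ^ 2) ∂ R - dist (b R) x ^ 2 / 4 := by
  have hpt : ∀ u, dist (hmid (b R) x) u ^ 2 - dist (b R) u ^ 2 ≤
      (1/2) * (dist x u ^ 2 - dist (b R) u ^ 2) - dist (b R) x ^ 2 / 4 := by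
    intro u
    have h := hmid_spec (b R) x u
    rw [dist_comm (hmid (b R) x) u, dist_comm (b R) u, dist_comm x u]
    linarith
  have hint1 : Integrable (fun u => dist (hmid (b R) x) u ^ 2 - dist (b R) u ^ 2) R :=
    integrable_sq_diff _ _ R hR
  have hint2 : Integrable (fun u =>
      (1/2) * (dist x u ^ 2 - dist (b R) u ^ 2) - dist (b R) x ^ 2 / 4) R :=
    ((integrable_sq_diff x (b R) R hR).const_mul _).sub (integrable_const _)
  calc ∫ u, (dist (hmid (b R) x) u ^ 2 - dist (b R) u ^ 2) ∂ R
      ≤ ∫ u, ((1/2) * (dist x u ^ 2 - dist (b R) u ^ 2) - dist (b R) x ^ 2 / 4) ∂ R :=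
        integral_mono hint1 hint2 hpt
    _ = (1/2) * ∫ u, (dist x u ^ 2 - dist (b R) u ^ 2) ∂ R - dist (b R) x ^ 2 / 4 := by
        rw [integral_sub (((integrable_sq_diff x (b R) R hR)).const_mul _) (integrable_const _),
          integral_const_mul, integral_const]
        simp

lemma dist_midseq (R : Measure M) (w : M) (k : ℕ) :
    dist (b R) (midseq b R w k) = dist (b R) w / 2 ^ k := by
  induction k with
  | zero => simp [midseq]
  | succ k ih =>
      show dist (b R) (hmid (b R) (midseq b R w k)) = _
      rw [dist_hmid_left_eq, ih]
      ring

include hb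

lemma variance (R : Measure M) [IsProbabilityMeasure R]
    (hR : ∀ z : M, Integrable (fun y => dist z y) R) (w : M) :
    dist (b R) w ^ 2 ≤ ∫ u, (dist w u ^ 2 - dist (b R) u ^ 2) ∂ R := by
  set G : M → ℝ := fun x => ∫ u, (dist x u ^ 2 - dist (b R) u ^ 2) ∂ R with hG
  have key : ∀ K : ℕ, (1 - (1/2 : ℝ) ^ K) * dist (b R) w ^ 2 + 2 ^ K * G (midseq b R w K) ≤ G w := by
    intro K
    induction K with
    | zero => simp [midseq]
    | succ K ih =>
        have hstep := G_mid_step b R hR (midseq b R w K)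
        have hd : dist (b R) (midseq b R w K) = dist (b R) w / 2 ^ K := dist_midseq b R w K
        have h2 : G (midseq b R w (K+1)) ≤ (1/2) * G (midseq b R w K) - (dist (b R) w / 2 ^ K) ^ 2/4 := by
          rw [← hd]; exact hstep
        have hpow : (0:ℝ) < 2 ^ K := by positivity
        calc (1 - (1/2 : ℝ) ^ (K+1)) * dist (b R) w ^ 2 + 2 ^ (K+1) * G (midseq b R w (K+1))
            ≤ (1 - (1/2 : ℝ) ^ (K+1)) * dist (b R) w ^ 2
              + 2 ^ (K+1) * ((1/2) * G (midseq b R w K) - (dist (b R) w / 2 ^ K) ^ 2/4) := by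
              have : (0:ℝ) < 2 ^ (K+1) := by positivity
              nlinarith [h2]
          _ = (1 - (1/2 : ℝ) ^ K) * dist (b R) w ^ 2 + 2 ^ K * G (midseq b R w K) := by
              simp only [div_pow, one_pow]
              field_simp
              ring
          _ ≤ G w := ih
  have hlim : Filter.Tendsto (fun K : ℕ => (1 - (1/2 : ℝ) ^ K) * dist (b R) w ^ 2)
      Filter.atTop (nhds (dist (b R) w ^ 2)) := by
    have h0 : Filter.Tendsto (fun K : ℕ => (1/2 : ℝ) ^ K) Filter.atTop (nhds 0) :=
      tendsto_pow_atTop_nhds_zero_of_lt_one (by norm_num) (by norm_num)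
    have := (h0.const_sub 1).mul_const (dist (b R) w ^ 2)
    simpa using this
  refine le_of_tendsto hlim (Filter.Eventually.of_forall (fun K => ?_))
  have hKnn := G_nonneg b hb R hR (midseq b R w K)
  have hpow : (0:ℝ) < 2 ^ K := by positivity
  have := key K
  nlinarith [this]

lemma convexV (R2ok : True) (x y : M) {t : ℝ} (h0 : 0 ≤ t) (h1 : t ≤ 1) (w : M) :
    dist w (b (R2 x y t)) ^ 2 ≤
      (1 - t) * dist w x ^ 2 + t * dist w y ^ 2 - t * (1 - t) * dist x y ^ 2 := by
  haveI := R2_prob x y h0 h1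
  have hv := variance b hb (R2 x y t) (R2_dist_integrable x y t) w
  set z := b (R2 x y t) with hz
  have hint : ∫ u, (dist w u ^ 2 - dist z u ^ 2) ∂ (R2 x y t)
      = (1 - t) * (dist w x ^ 2 - dist z x ^ 2) + t * (dist w y ^ 2 - dist z y ^ 2) :=
    R2_integral x y h0 h1 _ (by fun_prop)
  rw [hint, dist_comm z w] at hv
  have htri : dist x y ≤ dist z x + dist z y := by
    rw [dist_comm z x]
    exact dist_triangle x z y
  have hcomp : t * (1 - t) * dist x y ^ 2 ≤ (1 - t) * dist z x ^ 2 + t * dist z y ^ 2 := by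
    have hsq : dist x y ^ 2 ≤ (dist z x + dist z y) ^ 2 := by
      refine pow_le_pow_left₀ dist_nonneg htri 2
    have h2 : (0:ℝ) ≤ t * (1 - t) := mul_nonneg h0 (by linarith)
    nlinarith [sq_nonneg ((1 - t) * dist z x - t * dist z y),
      mul_le_mul_of_nonneg_left hsq h2]
  linarith

lemma dist_bR2_left (x y : M) {t : ℝ} (h0 : 0 ≤ t) (h1 : t ≤ 1) :
    dist x (b (R2 x y t)) ≤ t * dist x y := by
  have h := convexV b hb trivial x y h0 h1 x
  simp only [dist_self] at h
  refine le_of_sq_le_sq'' dist_nonneg (mul_nonneg h0 dist_nonneg) ?_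
  calc dist x (b (R2 x y t)) ^ 2
      ≤ (1 - t) * 0 ^ 2 + t * dist x y ^ 2 - t * (1 - t) * dist x y ^ 2 := h
    _ = (t * dist x y) ^ 2 := by ring

lemma dist_bR2_right (x y : M) {t : ℝ} (h0 : 0 ≤ t) (h1 : t ≤ 1) :
    dist (b (R2 x y t)) y ≤ (1 - t) * dist x y := by
  have h := convexV b hb trivial x y h0 h1 y
  simp only [dist_self] at h
  rw [dist_comm]
  refine le_of_sq_le_sq'' dist_nonneg (mul_nonneg (by linarith) dist_nonneg) ?_
  calc dist y (b (R2 x y t)) ^ 2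
      ≤ (1 - t) * dist y x ^ 2 + t * 0 ^ 2 - t * (1 - t) * dist x y ^ 2 := h
    _ = ((1 - t) * dist x y) ^ 2 := by rw [dist_comm y x]; ring

lemma dist_bR2_pair (x y : M) {s t : ℝ} (h0 : 0 ≤ s) (hst : s ≤ t) (h1 : t ≤ 1) :
    dist (b (R2 x y s)) (b (R2 x y t)) ≤ (t - s) * dist x y := by
  have hs1 : s ≤ 1 := le_trans hst h1
  have ht0 : 0 ≤ t := le_trans h0 hst
  have hzx : dist x (b (R2 x y s)) ≤ s * dist x y := dist_bR2_left b hb x y h0 hs1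
  have hzy : dist (b (R2 x y s)) y ≤ (1 - s) * dist x y := dist_bR2_right b hb x y h0 hs1
  have h := convexV b hb trivial x y ht0 h1 (b (R2 x y s))
  refine le_of_sq_le_sq'' dist_nonneg (mul_nonneg (by linarith) dist_nonneg) ?_
  have e0 : (0:ℝ) ≤ dist x y := dist_nonneg
  have l1 : dist (b (R2 x y s)) x ^ 2 ≤ (s * dist x y) ^ 2 := by
    rw [dist_comm]
    exact pow_le_pow_left₀ dist_nonneg hzx 2
  have l2 : dist (b (R2 x y s)) y ^ 2 ≤ ((1 - s) * dist x y) ^ 2 :=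
    pow_le_pow_left₀ dist_nonneg hzy 2
  calc dist (b (R2 x y s)) (b (R2 x y t)) ^ 2
      ≤ (1 - t) * dist (b (R2 x y s)) x ^ 2 + t * dist (b (R2 x y s)) y ^ 2
        - t * (1 - t) * dist x y ^ 2 := h
    _ ≤ (1 - t) * (s * dist x y) ^ 2 + t * ((1 - s) * dist x y) ^ 2
        - t * (1 - t) * dist x y ^ 2 := by nlinarith [l1, l2]
    _ = ((t - s) * dist x y) ^ 2 := by ring

lemma chain (x y : M) (n : ℕ) (hn : 0 < n) :
    ∃ c : ℕ → M, c 0 = x ∧ c n = y ∧ ∀ i, i < n → dist (c i) (c (i + 1)) ≤ dist x y / n := by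
  have hnR : (0:ℝ) < n := by exact_mod_cast hn
  refine ⟨fun i => b (R2 x y ((i : ℝ) / n)), ?_, ?_, ?_⟩
  · show b (R2 x y (((0:ℕ) : ℝ) / n)) = x
    have h := dist_bR2_left b hb x y (le_refl (0:ℝ)) zero_le_one
    rw [eq_comm, ← dist_eq_zero]
    simp only [Nat.cast_zero, zero_div]
    have h0 : dist x (b (R2 x y 0)) ≤ 0 := by simpa using h
    exact le_antisymm h0 dist_nonneg
  · show b (R2 x y (((n:ℕ) : ℝ) / n)) = y
    have h := dist_bR2_right b hb x y (zero_le_one) (le_refl (1:ℝ))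
    have hh : ((n:ℕ) : ℝ) / n = 1 := div_self (ne_of_gt hnR)
    rw [hh, ← dist_eq_zero]
    have h1 : dist (b (R2 x y 1)) y ≤ 0 := by simpa using h
    exact le_antisymm h1 dist_nonneg
  · intro i hi
    show dist (b (R2 x y ((i : ℝ) / n))) (b (R2 x y (((i + 1 : ℕ) : ℝ) / n))) ≤ dist x y / n
    have hc : ((i + 1 : ℕ) : ℝ) = (i : ℝ) + 1 := by push_cast; ring
    rw [hc]
    have hi1 : ((i : ℝ) + 1) ≤ n := by exact_mod_cast Nat.succ_le_of_lt hi
    have h := dist_bR2_pair b hb x y (s := (i:ℝ)/n) (t := ((i:ℝ)+1)/n)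
      (by positivity) (by apply div_le_div_of_nonneg_right <;> linarith) (by rw [div_le_one hnR]; exact hi1)
    calc dist (b (R2 x y ((i:ℝ)/n))) (b (R2 x y (((i:ℝ)+1)/n)))
        ≤ (((i:ℝ)+1)/n - (i:ℝ)/n) * dist x y := h
      _ = dist x y / n := by field_simp; ring

lemma gammaIneq (p q y y' : M) :
    dist p y' ^ 2 + dist q y ^ 2
      ≤ dist p y ^ 2 + dist q y' ^ 2 + dist p q ^ 2 + dist y y' ^ 2 := by
  have h1 := hmid_spec q y p
  have h2 := hmid_spec q y y'
  have h3 := hmid_spec p y' (hmid q y)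
  have h0 := sq_nonneg (dist (hmid q y) (hmid p y'))
  rw [dist_comm (hmid q y) p, dist_comm (hmid q y) y'] at h3
  rw [dist_comm y' q, dist_comm y' y] at h2
  linarith

lemma quadruple (p q y y' : M) :
    dist p y' ^ 2 + dist q y ^ 2 - dist p y ^ 2 - dist q y' ^ 2
      ≤ 2 * dist p q * dist y y' := by
  have main : ∀ n m : ℕ, 0 < n → 0 < m →
      dist p y' ^ 2 + dist q y ^ 2 - dist p y ^ 2 - dist q y' ^ 2
        ≤ (m : ℝ) * dist p q ^ 2 / n + (n : ℝ) * dist y y' ^ 2 / m := by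
    intro n m hn hm
    have hnR : (0:ℝ) < n := by exact_mod_cast hn
    have hmR : (0:ℝ) < m := by exact_mod_cast hm
    obtain ⟨c, hc0, hcn, hc⟩ := chain b hb p q n hn
    obtain ⟨d, hd0, hdm, hd⟩ := chain b hb y y' m hm
    set F : ℕ → ℕ → ℝ := fun i j => dist (c i) (d j) ^ 2 with hF
    have step : ∀ i j, i < n → j < m →
        (F i (j+1) - F i j) - (F (i+1) (j+1) - F (i+1) j)
          ≤ dist p q ^ 2 / (n:ℝ)^2 + dist y y' ^ 2 / (m:ℝ)^2 := by
      intro i j hi hj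
      have hg := gammaIneq b hb (c i) (c (i+1)) (d j) (d (j+1))
      have h1 : dist (c i) (c (i+1)) ^ 2 ≤ dist p q ^ 2 / (n:ℝ)^2 := by
        calc dist (c i) (c (i+1)) ^ 2 ≤ (dist p q / n) ^ 2 :=
              pow_le_pow_left₀ dist_nonneg (hc i hi) 2
          _ = dist p q ^ 2 / (n:ℝ)^2 := by rw [div_pow]
      have h2 : dist (d j) (d (j+1)) ^ 2 ≤ dist y y' ^ 2 / (m:ℝ)^2 := by
        calc dist (d j) (d (j+1)) ^ 2 ≤ (dist y y' / m) ^ 2 :=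
              pow_le_pow_left₀ dist_nonneg (hd j hj) 2
          _ = dist y y' ^ 2 / (m:ℝ)^2 := by rw [div_pow]
      simp only [hF]
      linarith [hg, h1, h2]
    have inner : ∀ j, ∑ i ∈ Finset.range n,
        ((F i (j+1) - F i j) - (F (i+1) (j+1) - F (i+1) j))
          = (F 0 (j+1) - F 0 j) - (F n (j+1) - F n j) :=
      fun j => Finset.sum_range_sub' (fun i => F i (j+1) - F i j) n
    have outer : ∑ j ∈ Finset.range m, ((F 0 (j+1) - F 0 j) - (F n (j+1) - F n j))
        = (F 0 m - F n m) - (F 0 0 - F n 0) := by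
      calc ∑ j ∈ Finset.range m, ((F 0 (j+1) - F 0 j) - (F n (j+1) - F n j))
          = ∑ j ∈ Finset.range m,
              ((fun j => F 0 j - F n j) (j+1) - (fun j => F 0 j - F n j) j) := by
            refine Finset.sum_congr rfl (fun j _ => by ring)
        _ = (F 0 m - F n m) - (F 0 0 - F n 0) := by
            rw [Finset.sum_range_sub (fun j => F 0 j - F n j) m]
    have bound : (F 0 m - F n m) - (F 0 0 - F n 0)
        ≤ (m:ℝ) * ((n:ℝ) * (dist p q ^ 2 / (n:ℝ)^2 + dist y y' ^ 2 / (m:ℝ)^2)) := by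
      rw [← outer]
      have hj : ∀ j ∈ Finset.range m, (F 0 (j+1) - F 0 j) - (F n (j+1) - F n j)
          ≤ (n:ℝ) * (dist p q ^ 2 / (n:ℝ)^2 + dist y y' ^ 2 / (m:ℝ)^2) := by
        intro j hjm
        rw [← inner j]
        calc ∑ i ∈ Finset.range n, ((F i (j+1) - F i j) - (F (i+1) (j+1) - F (i+1) j))
            ≤ ∑ _i ∈ Finset.range n, (dist p q ^ 2 / (n:ℝ)^2 + dist y y' ^ 2 / (m:ℝ)^2) :=
              Finset.sum_le_sum (fun i hi =>
                step i j (Finset.mem_range.mp hi) (Finset.mem_range.mp hjm))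
          _ = (n:ℝ) * (dist p q ^ 2 / (n:ℝ)^2 + dist y y' ^ 2 / (m:ℝ)^2) := by
              rw [Finset.sum_const, Finset.card_range, nsmul_eq_mul]
      calc ∑ j ∈ Finset.range m, ((F 0 (j+1) - F 0 j) - (F n (j+1) - F n j))
          ≤ ∑ _j ∈ Finset.range m,
              ((n:ℝ) * (dist p q ^ 2 / (n:ℝ)^2 + dist y y' ^ 2 / (m:ℝ)^2)) :=
            Finset.sum_le_sum hj
        _ = (m:ℝ) * ((n:ℝ) * (dist p q ^ 2 / (n:ℝ)^2 + dist y y' ^ 2 / (m:ℝ)^2)) := by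
            rw [Finset.sum_const, Finset.card_range, nsmul_eq_mul]
    have e1 : F 0 m = dist p y' ^ 2 := by simp only [hF, hc0, hdm]
    have e2 : F n 0 = dist q y ^ 2 := by simp only [hF, hcn, hd0]
    have e3 : F 0 0 = dist p y ^ 2 := by simp only [hF, hc0, hd0]
    have e4 : F n m = dist q y' ^ 2 := by simp only [hF, hcn, hdm]
    have halg : (m:ℝ) * ((n:ℝ) * (dist p q ^ 2 / (n:ℝ)^2 + dist y y' ^ 2 / (m:ℝ)^2))
        = (m:ℝ) * dist p q ^ 2 / n + (n:ℝ) * dist y y' ^ 2 / m := by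
      field_simp
    rw [e1, e2, e3, e4, halg] at bound
    linarith
  rcases eq_or_ne (dist p q) 0 with hD | hD
  · have hpq : p = q := by rwa [dist_eq_zero] at hD
    rw [hpq]
    simp [dist_self]
  rcases eq_or_ne (dist y y') 0 with he | he
  · have hyy : y = y' := by rwa [dist_eq_zero] at he
    rw [hyy]
    simp [dist_self]
  have hDpos : 0 < dist p q := lt_of_le_of_ne dist_nonneg (Ne.symm hD)
  have hepos : 0 < dist y y' := lt_of_le_of_ne dist_nonneg (Ne.symm he)
  set D := dist p q with hDdef
  set e := dist y y' with hedef
  refine le_of_forall_pos_le_add (fun ε hε => ?_)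
  have hstep : e / D < e / D + ε / D ^ 2 := by
    have : 0 < ε / D ^ 2 := div_pos hε (by positivity)
    linarith
  obtain ⟨r, hr1, hr2⟩ := exists_rat_btwn hstep
  have hrpos : (0:ℝ) < (r:ℝ) := lt_trans (div_pos hepos hDpos) hr1
  have hnum : 0 < r.num := Rat.num_pos.mpr (by exact_mod_cast hrpos)
  set n := r.den with hndef
  set m := r.num.toNat with hmdef
  have hn : 0 < n := r.pos
  have hm : 0 < m := by omega
  have hmr : (m:ℝ) = ((r.num : ℤ) : ℝ) := by
    have : (r.num.toNat : ℤ) = r.num := Int.toNat_of_nonneg hnum.le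
    exact_mod_cast this
  have hcast : (m:ℝ) / (n:ℝ) = (r:ℝ) := by
    rw [hmr, Rat.cast_def]
  have h := main n m hn hm
  have hnR : (0:ℝ) < n := by exact_mod_cast hn
  have hmR : (0:ℝ) < m := by exact_mod_cast hm
  have hb1 : (m:ℝ) * D ^ 2 / n = D ^ 2 * ((m:ℝ)/(n:ℝ)) := by ring
  have hb2 : (n:ℝ) * e ^ 2 / m = e ^ 2 / ((m:ℝ)/(n:ℝ)) := by
    field_simp
  rw [hb1, hb2, hcast] at h
  have hub1 : D ^ 2 * (r:ℝ) ≤ D * e + ε := by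
    have := mul_le_mul_of_nonneg_left hr2.le (le_of_lt (by positivity : (0:ℝ) < D ^ 2))
    calc D ^ 2 * (r:ℝ) ≤ D ^ 2 * (e / D + ε / D ^ 2) := this
      _ = D * e + ε := by field_simp
  have hub2 : e ^ 2 / (r:ℝ) ≤ D * e := by
    have h1 : e ^ 2 / (r:ℝ) ≤ e ^ 2 / (e / D) :=
      div_le_div_of_nonneg_left (by positivity) (div_pos hepos hDpos) hr1.le
    calc e ^ 2 / (r:ℝ) ≤ e ^ 2 / (e / D) := h1
      _ = D * e := by field_simp
  linarith

theorem test_main [TopologicalSpace.SeparableSpace M]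
    (P Q : Measure M) [IsProbabilityMeasure P] [IsProbabilityMeasure Q]
    (hP : ∀ z : M, Integrable (fun y => dist z y) P)
    (hQ : ∀ z : M, Integrable (fun y => dist z y) Q) :
    dist (b P) (b Q) ≤ W1 P Q := by
  classical
  haveI : SecondCountableTopology M := UniformSpace.secondCountable_of_separable M
  obtain ⟨p, hp⟩ : ∃ p, b P = p := ⟨b P, rfl⟩
  obtain ⟨q, hq⟩ : ∃ q, b Q = q := ⟨b Q, rfl⟩
  rw [hp, hq]
  have hD0 : (0:ℝ) ≤ dist p q := dist_nonneg
  have h1 : dist p q ^ 2 ≤ ∫ u, (dist q u ^ 2 - dist p u ^ 2) ∂ P := by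
    have := variance b hb P hP q
    rwa [hp] at this
  have h2 : dist p q ^ 2 ≤ ∫ u, (dist p u ^ 2 - dist q u ^ 2) ∂ Q := by
    have := variance b hb Q hQ p
    rw [hq] at this
    rwa [dist_comm q p] at this
  have hnonempty : { r : ℝ | ∃ π : Measure (M × M), IsProbabilityMeasure π ∧
      π.map Prod.fst = P ∧ π.map Prod.snd = Q ∧ r = ∫ p, dist p.1 p.2 ∂ π }.Nonempty := by
    refine ⟨∫ a, dist a.1 a.2 ∂ (P.prod Q), P.prod Q, inferInstance, ?_, ?_, rfl⟩
    · rw [Measure.map_fst_prod]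
      simp [measure_univ]
    · rw [Measure.map_snd_prod]
      simp [measure_univ]
  refine le_csInf hnonempty ?_
  rintro r ⟨π, hπprob, hπ1, hπ2, hreq⟩
  haveI := hπprob
  have hcont1 : Continuous (fun u : M => dist q u ^ 2 - dist p u ^ 2) := by fun_prop
  have hcont2 : Continuous (fun u : M => dist p u ^ 2 - dist q u ^ 2) := by fun_prop
  have hint1 : Integrable (fun a : M × M => dist q a.1 ^ 2 - dist p a.1 ^ 2) π := by
    have hi : Integrable (fun u : M => dist q u ^ 2 - dist p u ^ 2) (π.map Prod.fst) := by
      rw [hπ1]; exact integrable_sq_diff q p P hP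
    exact (integrable_map_measure hi.aestronglyMeasurable measurable_fst.aemeasurable).mp hi
  have hint2 : Integrable (fun a : M × M => dist p a.2 ^ 2 - dist q a.2 ^ 2) π := by
    have hi : Integrable (fun u : M => dist p u ^ 2 - dist q u ^ 2) (π.map Prod.snd) := by
      rw [hπ2]; exact integrable_sq_diff p q Q hQ
    exact (integrable_map_measure hi.aestronglyMeasurable measurable_snd.aemeasurable).mp hi
  have htrans1 : ∫ u, (dist q u ^ 2 - dist p u ^ 2) ∂ P
      = ∫ a : M × M, (dist q a.1 ^ 2 - dist p a.1 ^ 2) ∂ π := by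
    rw [← hπ1, integral_map measurable_fst.aemeasurable]
    exact hcont1.aestronglyMeasurable
  have htrans2 : ∫ u, (dist p u ^ 2 - dist q u ^ 2) ∂ Q
      = ∫ a : M × M, (dist p a.2 ^ 2 - dist q a.2 ^ 2) ∂ π := by
    rw [← hπ2, integral_map measurable_snd.aemeasurable]
    exact hcont2.aestronglyMeasurable
  have hdistint : Integrable (fun a : M × M => dist a.1 a.2) π := by
    have i1 : Integrable (fun a : M × M => dist q a.1) π := by
      have hi : Integrable (fun u : M => dist q u) (π.map Prod.fst) := by
        rw [hπ1]; exact hP q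
      exact (integrable_map_measure hi.aestronglyMeasurable measurable_fst.aemeasurable).mp hi
    have i2 : Integrable (fun a : M × M => dist q a.2) π := by
      have hi : Integrable (fun u : M => dist q u) (π.map Prod.snd) := by
        rw [hπ2]; exact hQ q
      exact (integrable_map_measure hi.aestronglyMeasurable measurable_snd.aemeasurable).mp hi
    refine (i1.add i2).mono' ?_ (Filter.Eventually.of_forall (fun a => ?_))
    · exact continuous_dist.aestronglyMeasurable
    · have htr : dist a.1 a.2 ≤ dist q a.1 + dist q a.2 := by
        rw [dist_comm q a.1]
        exact dist_triangle a.1 q a.2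
      have : ‖dist a.1 a.2‖ = dist a.1 a.2 := Real.norm_of_nonneg dist_nonneg
      rw [this]
      exact htr
  have hpt : ∀ a : M × M, (dist q a.1 ^ 2 - dist p a.1 ^ 2)
      + (dist p a.2 ^ 2 - dist q a.2 ^ 2) ≤ 2 * dist p q * dist a.1 a.2 := by
    intro a
    have := quadruple b hb p q a.1 a.2
    linarith
  have hsum : 2 * dist p q ^ 2
      ≤ ∫ a : M × M, ((dist q a.1 ^ 2 - dist p a.1 ^ 2)
        + (dist p a.2 ^ 2 - dist q a.2 ^ 2)) ∂ π := by
    rw [integral_add hint1 hint2]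
    rw [htrans1] at h1
    rw [htrans2] at h2
    linarith
  have hmono : ∫ a : M × M, ((dist q a.1 ^ 2 - dist p a.1 ^ 2)
        + (dist p a.2 ^ 2 - dist q a.2 ^ 2)) ∂ π
      ≤ ∫ a : M × M, 2 * dist p q * dist a.1 a.2 ∂ π :=
    integral_mono (hint1.add hint2) (hdistint.const_mul _) hpt
  have hfin : ∫ a : M × M, 2 * dist p q * dist a.1 a.2 ∂ π
      = 2 * dist p q * r := by
    rw [hreq]
    exact integral_const_mul _ _
  have hr0 : 0 ≤ r := by
    rw [hreq]
    exact integral_nonneg (fun a => dist_nonneg)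
  rcases eq_or_lt_of_le hD0 with hD | hD
  · rw [← hD]; exact hr0
  · nlinarith [hsum, hmono, hfin]

end Bary

end BWLaux

/-- In a separable Hadamard space, the Fréchet mean (barycenter) map is
1-Lipschitz with respect to the 1-Wasserstein distance. -/
theorem barycenter_wasserstein_lipschitz
    {M : Type*} [MetricSpace M] [HadamardSpace M] [TopologicalSpace.SeparableSpace M]
    [MeasurableSpace M] [BorelSpace M]
    (b : Measure M → M)
    (hb : ∀ (R : Measure M), IsProbabilityMeasure R →
      (∀ z : M, Integrable (fun y => dist z y) R) →
      ∀ x : M, (1 / 2 : ℝ) * MeasureTheory.integral R (fun y => dist (b R) y ^ 2 - dist (b R) y ^ 2) ≤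
        (1 / 2 : ℝ) * MeasureTheory.integral R (fun y => dist x y ^ 2 - dist (b R) y ^ 2))
    (P Q : Measure M) [IsProbabilityMeasure P] [IsProbabilityMeasure Q]
    (hP : ∀ z : M, Integrable (fun y => dist z y) P)
    (hQ : ∀ z : M, Integrable (fun y => dist z y) Q) :
    dist (b P) (b Q) ≤ W1 P Q :=
  BWLaux.test_main b hb P Q hP hQ
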